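/- arXiv:1804.05668 — 4 statements merged into one kernel-verified Lean document; each statement's English description precedes it below -/
import Mathlib

section
/- For every λ > 0 there exists a constant C > 0 such that for all x, y, t ∈ (0,∞), the Bessel Poisson kernel satisfies 0 ≤ P_t^λ(x,y) ≤ C · t (xy)^λ / ((x−y)² + t²)^{λ+1}. -/
open Real MeasureTheory Set Filter

/-- The Bessel Poisson kernel `P_t^λ(x,y)`. -/
noncomputable def besselPoissonKernel (lam x y t : ℝ) : ℝ :=
  (2 * lam / π) * t * (x * y) ^ lam *
    ∫ θ in (0:ℝ)..π,
      (Real.sin θ) ^ (2 * lam - 1) /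
        ((x - y) ^ 2 + t ^ 2 + 2 * x * y * (1 - Real.cos θ)) ^ (lam + 1)

lemma sin_rpow_intervalIntegrable {p : ℝ} (hp : -1 < p) :
    IntervalIntegrable (fun θ => Real.sin θ ^ p) volume 0 π := by
  have hmeas : Measurable (fun θ => Real.sin θ ^ p) :=
    Real.measurable_sin.pow_const p
  rcases le_or_gt 0 p with hp0 | hp0
  · -- bounded by 1
    refine (intervalIntegrable_const (c := (1:ℝ))).mono_fun
      hmeas.aestronglyMeasurable ?_
    rw [uIoc_of_le Real.pi_pos.le]
    filter_upwards [ae_restrict_mem measurableSet_Ioc] with θ hθ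
    have hs0 : 0 ≤ Real.sin θ := Real.sin_nonneg_of_nonneg_of_le_pi hθ.1.le hθ.2
    have : Real.sin θ ^ p ≤ 1 := Real.rpow_le_one hs0 (Real.sin_le_one θ) hp0
    simp only [Real.norm_eq_abs, abs_of_nonneg (Real.rpow_nonneg hs0 p)]
    simpa using this
  · -- dominate by (2/π)^p * (θ^p + (π-θ)^p)
    have h1 : IntervalIntegrable (fun θ : ℝ => θ ^ p) volume 0 π :=
      intervalIntegral.intervalIntegrable_rpow' hp
    have h2 : IntervalIntegrable (fun θ : ℝ => (π - θ) ^ p) volume 0 π := by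
      have := (h1.comp_sub_left π).symm
      simpa using this
    have hg : IntervalIntegrable
        (fun θ : ℝ => (2 / π) ^ p * (θ ^ p + (π - θ) ^ p)) volume 0 π :=
      (h1.add h2).const_mul _
    refine hg.mono_fun hmeas.aestronglyMeasurable ?_
    rw [uIoc_of_le Real.pi_pos.le]
    filter_upwards [ae_restrict_mem measurableSet_Ioc] with θ hθ
    have hθ1 : 0 < θ := hθ.1
    have hθ2 : θ ≤ π := hθ.2
    have hs0 : 0 ≤ Real.sin θ := Real.sin_nonneg_of_nonneg_of_le_pi hθ1.le hθ2
    have hc : (0:ℝ) ≤ (2 / π) ^ p := Real.rpow_nonneg (by positivity) p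
    have hsum : (0:ℝ) ≤ θ ^ p + (π - θ) ^ p := by
      have := Real.rpow_nonneg hθ1.le p
      have := Real.rpow_nonneg (sub_nonneg.mpr hθ2) p
      linarith
    rw [Real.norm_eq_abs, Real.norm_eq_abs, abs_of_nonneg (Real.rpow_nonneg hs0 p),
      abs_of_nonneg (mul_nonneg hc hsum)]
    -- key pointwise bound
    rcases le_or_gt θ (π / 2) with hhalf | hhalf
    · have hsin : 2 / π * θ ≤ Real.sin θ := Real.mul_le_sin hθ1.le hhalf
      have hpos : 0 < 2 / π * θ := by positivity
      have h1' : Real.sin θ ^ p ≤ (2 / π * θ) ^ p :=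
        Real.rpow_le_rpow_of_nonpos hpos hsin hp0.le
      have h2' : (2 / π * θ) ^ p = (2 / π) ^ p * θ ^ p :=
        Real.mul_rpow (by positivity) hθ1.le
      have h3' : (2 / π) ^ p * θ ^ p ≤ (2 / π) ^ p * (θ ^ p + (π - θ) ^ p) := by
        have := Real.rpow_nonneg (sub_nonneg.mpr hθ2) p
        nlinarith
      linarith [h1', h2' ▸ h1', h3']
    · rcases eq_or_lt_of_le hθ2 with heq | hlt
      · have : Real.sin θ = 0 := by rw [heq]; exact Real.sin_pi
        rw [this, Real.zero_rpow (by linarith : p ≠ 0)]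
        exact mul_nonneg hc hsum
      · have hπθ : 0 < π - θ := by linarith
        have hπθ2 : π - θ ≤ π / 2 := by linarith
        have hsin : 2 / π * (π - θ) ≤ Real.sin (π - θ) :=
          Real.mul_le_sin hπθ.le hπθ2
        rw [Real.sin_pi_sub] at hsin
        have hpos : 0 < 2 / π * (π - θ) := by positivity
        have h1' : Real.sin θ ^ p ≤ (2 / π * (π - θ)) ^ p :=
          Real.rpow_le_rpow_of_nonpos hpos hsin hp0.le
        have h2' : (2 / π * (π - θ)) ^ p = (2 / π) ^ p * (π - θ) ^ p :=
          Real.mul_rpow (by positivity) hπθ.le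
        have h3' : (2 / π) ^ p * (π - θ) ^ p ≤ (2 / π) ^ p * (θ ^ p + (π - θ) ^ p) := by
          have := Real.rpow_nonneg hθ1.le p
          nlinarith
        linarith [h1', h2' ▸ h1', h3']

theorem bessel_poisson_kernel_upper_bound (lam : ℝ) (hlam : 0 < lam) :
    ∃ C : ℝ, 0 < C ∧ ∀ x y t : ℝ, 0 < x → 0 < y → 0 < t →
      0 ≤ besselPoissonKernel lam x y t ∧
      besselPoissonKernel lam x y t ≤
        C * t * (x * y) ^ lam / ((x - y) ^ 2 + t ^ 2) ^ (lam + 1) := by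
  set p := 2 * lam - 1 with hpdef
  have hp : -1 < p := by simp only [hpdef]; linarith
  have hint : IntervalIntegrable (fun θ => Real.sin θ ^ p) volume 0 π :=
    sin_rpow_intervalIntegrable hp
  set I := ∫ θ in (0:ℝ)..π, Real.sin θ ^ p with hIdef
  have hI : 0 ≤ I := by
    apply intervalIntegral.integral_nonneg Real.pi_pos.le
    intro θ hθ
    exact Real.rpow_nonneg (Real.sin_nonneg_of_nonneg_of_le_pi hθ.1 hθ.2) p
  have hC : 0 < 2 * lam / π * I + 1 := by positivity
  refine ⟨2 * lam / π * I + 1, hC, ?_⟩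
  intro x y t hx hy ht
  set D := (x - y) ^ 2 + t ^ 2 with hDdef
  have hD0 : 0 < D := by positivity
  have hE : ∀ θ ∈ Icc (0:ℝ) π,
      D ≤ (x - y) ^ 2 + t ^ 2 + 2 * x * y * (1 - Real.cos θ) := by
    intro θ hθ
    have h1 : 0 ≤ 1 - Real.cos θ := by linarith [Real.cos_le_one θ]
    have h2 : 0 ≤ 2 * x * y * (1 - Real.cos θ) :=
      mul_nonneg (by positivity) h1
    linarith
  have hEpos : ∀ θ : ℝ,
      0 < (x - y) ^ 2 + t ^ 2 + 2 * x * y * (1 - Real.cos θ) := by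
    intro θ
    have h1 : 0 ≤ 1 - Real.cos θ := by linarith [Real.cos_le_one θ]
    have h2 : 0 ≤ 2 * x * y * (1 - Real.cos θ) :=
      mul_nonneg (by positivity) h1
    have h3 : 0 < (x - y) ^ 2 + t ^ 2 := by positivity
    linarith
  -- integrand nonneg
  have hfnn : ∀ θ ∈ Icc (0:ℝ) π,
      0 ≤ Real.sin θ ^ p /
        ((x - y) ^ 2 + t ^ 2 + 2 * x * y * (1 - Real.cos θ)) ^ (lam + 1) := by
    intro θ hθ
    exact div_nonneg (Real.rpow_nonneg (Real.sin_nonneg_of_nonneg_of_le_pi hθ.1 hθ.2) p)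
      (Real.rpow_nonneg (hEpos θ).le _)
  have hJnn : 0 ≤ ∫ θ in (0:ℝ)..π,
      Real.sin θ ^ p /
        ((x - y) ^ 2 + t ^ 2 + 2 * x * y * (1 - Real.cos θ)) ^ (lam + 1) :=
    intervalIntegral.integral_nonneg Real.pi_pos.le (fun θ hθ => hfnn θ hθ)
  have hA : 0 ≤ 2 * lam / π * t * (x * y) ^ lam := by positivity
  constructor
  · unfold besselPoissonKernel
    rw [hpdef] at hJnn
    exact mul_nonneg hA hJnn
  · -- upper bound
    -- dominating function
    have hgint : IntervalIntegrable
        (fun θ => Real.sin θ ^ p * (D ^ (lam + 1))⁻¹) volume 0 π :=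
      hint.mul_const _
    have hmeasf : Measurable (fun θ => Real.sin θ ^ p /
        ((x - y) ^ 2 + t ^ 2 + 2 * x * y * (1 - Real.cos θ)) ^ (lam + 1)) := by
      apply Measurable.div
      · exact Real.measurable_sin.pow_const p
      · exact ((measurable_const.add
          ((measurable_const).mul (measurable_const.sub Real.measurable_cos))).pow_const _)
    have hle : ∀ θ ∈ Icc (0:ℝ) π,
        Real.sin θ ^ p /
          ((x - y) ^ 2 + t ^ 2 + 2 * x * y * (1 - Real.cos θ)) ^ (lam + 1)
        ≤ Real.sin θ ^ p * (D ^ (lam + 1))⁻¹ := by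
      intro θ hθ
      rw [← div_eq_mul_inv]
      apply div_le_div_of_nonneg_left
        (Real.rpow_nonneg (Real.sin_nonneg_of_nonneg_of_le_pi hθ.1 hθ.2) p)
        (Real.rpow_pos_of_pos hD0 _)
      exact Real.rpow_le_rpow hD0.le (hE θ hθ) (by linarith)
    have hfint : IntervalIntegrable
        (fun θ => Real.sin θ ^ p /
          ((x - y) ^ 2 + t ^ 2 + 2 * x * y * (1 - Real.cos θ)) ^ (lam + 1))
        volume 0 π := by
      refine hgint.mono_fun hmeasf.aestronglyMeasurable ?_
      rw [uIoc_of_le Real.pi_pos.le]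
      filter_upwards [ae_restrict_mem measurableSet_Ioc] with θ hθ
      have hθ' : θ ∈ Icc (0:ℝ) π := ⟨hθ.1.le, hθ.2⟩
      rw [Real.norm_eq_abs, Real.norm_eq_abs, abs_of_nonneg (hfnn θ hθ'),
        abs_of_nonneg (mul_nonneg
          (Real.rpow_nonneg (Real.sin_nonneg_of_nonneg_of_le_pi hθ'.1 hθ'.2) p)
          (inv_nonneg.mpr (Real.rpow_nonneg hD0.le _)))]
      exact hle θ hθ'
    have hJle : (∫ θ in (0:ℝ)..π,
        Real.sin θ ^ p /
          ((x - y) ^ 2 + t ^ 2 + 2 * x * y * (1 - Real.cos θ)) ^ (lam + 1))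
        ≤ I * (D ^ (lam + 1))⁻¹ := by
      have := intervalIntegral.integral_mono_on Real.pi_pos.le hfint hgint hle
      rwa [intervalIntegral.integral_mul_const] at this
    unfold besselPoissonKernel
    rw [← hpdef, ← hDdef]
    calc 2 * lam / π * t * (x * y) ^ lam *
          ∫ θ in (0:ℝ)..π, Real.sin θ ^ p /
            ((x - y) ^ 2 + t ^ 2 + 2 * x * y * (1 - Real.cos θ)) ^ (lam + 1)
        ≤ 2 * lam / π * t * (x * y) ^ lam * (I * (D ^ (lam + 1))⁻¹) := by
          exact mul_le_mul_of_nonneg_left hJle hA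
      _ = (2 * lam / π * I) * t * (x * y) ^ lam / D ^ (lam + 1) := by
          field_simp
      _ ≤ (2 * lam / π * I + 1) * t * (x * y) ^ lam / D ^ (lam + 1) := by
          have h2 : 2 * lam / π * I ≤ 2 * lam / π * I + 1 := by linarith
          gcongr
end

section
/- For every λ > 0 there exists a constant C > 0 such that for all x, y, t ∈ (0,∞), the Bessel Poisson kernel satisfies P_t^λ(x,y) ≤ C · t / ((x−y)² + t²). -/
open Real MeasureTheory Set Filter

private lemma one_sub_cos_pos {θ : ℝ} (hθ : θ ∈ Ioo 0 π) : 0 < 1 - Real.cos θ := by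
  have h := Real.cos_lt_cos_of_nonneg_of_le_pi le_rfl hθ.2.le hθ.1
  rw [Real.cos_zero] at h
  linarith

private lemma one_add_cos_pos {θ : ℝ} (hθ : θ ∈ Ioo 0 π) : 0 < 1 + Real.cos θ := by
  have h := Real.cos_lt_cos_of_nonneg_of_le_pi hθ.1.le le_rfl hθ.2
  rw [Real.cos_pi] at h
  linarith

private lemma hasDerivAt_one_sub_cos (θ : ℝ) :
    HasDerivAt (fun u : ℝ => 1 - Real.cos u) (Real.sin θ) θ := by
  simpa using (Real.hasDerivAt_cos θ).const_sub 1

private lemma hasDerivAt_H1 (lam D a θ : ℝ) (hlam : 0 < lam) (hD : 0 < D) (ha : 0 < a)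
    (hθ : θ ∈ Ioo 0 π) :
    HasDerivAt (fun u : ℝ => (1 - Real.cos u) ^ lam / (D + a * (1 - Real.cos u)) ^ lam)
      (lam * D *
        (Real.sin θ * (1 - Real.cos θ) ^ (lam - 1) /
          (D + a * (1 - Real.cos θ)) ^ (lam + 1))) θ := by
  have hs : 0 < 1 - Real.cos θ := one_sub_cos_pos hθ
  have hP : 0 < D + a * (1 - Real.cos θ) := by positivity
  have h1 := hasDerivAt_one_sub_cos θ
  have hN : HasDerivAt (fun u : ℝ => (1 - Real.cos u) ^ lam)
      (Real.sin θ * lam * (1 - Real.cos θ) ^ (lam - 1)) θ :=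
    h1.rpow_const (Or.inl hs.ne')
  have h2 : HasDerivAt (fun u : ℝ => D + a * (1 - Real.cos u)) (a * Real.sin θ) θ :=
    (h1.const_mul a).const_add D
  have hQ : HasDerivAt (fun u : ℝ => (D + a * (1 - Real.cos u)) ^ lam)
      (a * Real.sin θ * lam * (D + a * (1 - Real.cos θ)) ^ (lam - 1)) θ :=
    h2.rpow_const (Or.inl hP.ne')
  have hQne : (D + a * (1 - Real.cos θ)) ^ lam ≠ 0 := (Real.rpow_pos_of_pos hP lam).ne'
  have := hN.div hQ hQne
  refine this.congr_deriv ?_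
  have e1 : (1 - Real.cos θ) ^ lam = (1 - Real.cos θ) ^ (lam - 1) * (1 - Real.cos θ) := by
    rw [← Real.rpow_add_one hs.ne' (lam - 1)]; ring_nf
  have e2 : (D + a * (1 - Real.cos θ)) ^ lam
      = (D + a * (1 - Real.cos θ)) ^ (lam - 1) * (D + a * (1 - Real.cos θ)) := by
    rw [← Real.rpow_add_one hP.ne' (lam - 1)]; ring_nf
  have e3 : (D + a * (1 - Real.cos θ)) ^ (lam + 1)
      = (D + a * (1 - Real.cos θ)) ^ lam * (D + a * (1 - Real.cos θ)) :=
    Real.rpow_add_one hP.ne' lam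
  rw [e3, e2, e1]
  have hP1 : (0:ℝ) < (D + a * (1 - Real.cos θ)) ^ (lam - 1) :=
    Real.rpow_pos_of_pos hP (lam - 1)
  field_simp
  ring


private lemma hasDerivAt_H2 (lam θ : ℝ) (hθ : θ ∈ Ioo 0 π) :
    HasDerivAt (fun u : ℝ => -(1 + Real.cos u) ^ lam)
      (lam * (Real.sin θ * (1 + Real.cos θ) ^ (lam - 1))) θ := by
  have hc : 0 < 1 + Real.cos θ := one_add_cos_pos hθ
  have h1 : HasDerivAt (fun u : ℝ => 1 + Real.cos u) (-Real.sin θ) θ :=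
    (Real.hasDerivAt_cos θ).const_add 1
  have h2 := (h1.rpow_const (p := lam) (Or.inl hc.ne')).neg
  refine h2.congr_deriv ?_
  ring

private lemma rpow_le_K {lam b : ℝ} (h1 : 1 ≤ b) (h2 : b ≤ 2) :
    b ^ (lam - 1) ≤ max 1 ((2:ℝ) ^ (lam - 1)) := by
  rcases le_total lam 1 with h | h
  · refine le_max_of_le_left ?_
    calc b ^ (lam - 1) ≤ b ^ (0:ℝ) :=
          Real.rpow_le_rpow_of_exponent_le h1 (by linarith)
      _ = 1 := Real.rpow_zero b
  · exact le_max_of_le_right (Real.rpow_le_rpow (by linarith) h2 (by linarith))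

private lemma pointwise_bound (lam D a θ : ℝ) (hlam : 0 < lam) (hD : 0 < D) (ha : 0 < a)
    (hθ : θ ∈ Ioo 0 π) :
    Real.sin θ ^ (2 * lam - 1) / (D + a * (1 - Real.cos θ)) ^ (lam + 1) ≤
      max 1 ((2:ℝ) ^ (lam - 1)) *
          (Real.sin θ * (1 - Real.cos θ) ^ (lam - 1) / (D + a * (1 - Real.cos θ)) ^ (lam + 1)) +
        max 1 ((2:ℝ) ^ (lam - 1)) / (D + a) ^ (lam + 1) *
          (Real.sin θ * (1 + Real.cos θ) ^ (lam - 1)) := by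
  set K := max 1 ((2:ℝ) ^ (lam - 1)) with hK
  have hsin : 0 < Real.sin θ := Real.sin_pos_of_pos_of_lt_pi hθ.1 hθ.2
  have hs : 0 < 1 - Real.cos θ := by
    have h := Real.cos_lt_cos_of_nonneg_of_le_pi le_rfl hθ.2.le hθ.1
    rw [Real.cos_zero] at h; linarith
  have hc : 0 < 1 + Real.cos θ := one_add_cos_pos hθ
  have hP : 0 < D + a * (1 - Real.cos θ) := by positivity
  have key : Real.sin θ ^ (2 * lam - 1)
      = Real.sin θ * ((1 - Real.cos θ) ^ (lam - 1) * (1 + Real.cos θ) ^ (lam - 1)) := by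
    have h1 : Real.sin θ ^ (2 * lam - 1) = Real.sin θ ^ (2 * (lam - 1)) * Real.sin θ := by
      rw [← Real.rpow_add_one hsin.ne' (2 * (lam - 1))]; ring_nf
    have h2 : Real.sin θ ^ (2 * (lam - 1)) = (Real.sin θ ^ (2:ℕ)) ^ (lam - 1) := by
      rw [← Real.rpow_natCast (Real.sin θ) 2, ← Real.rpow_mul hsin.le]
      norm_num
    have h3 : Real.sin θ ^ (2:ℕ) = (1 - Real.cos θ) * (1 + Real.cos θ) := by
      have := Real.sin_sq θ; nlinarith [this]
    rw [h1, h2, h3, Real.mul_rpow hs.le hc.le]; ring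
  rw [key]
  have hKpos : (0:ℝ) < K := lt_of_lt_of_le one_pos (le_max_left _ _)
  have hs1 : (0:ℝ) ≤ (1 - Real.cos θ) ^ (lam - 1) := Real.rpow_nonneg hs.le _
  have hc1 : (0:ℝ) ≤ (1 + Real.cos θ) ^ (lam - 1) := Real.rpow_nonneg hc.le _
  rcases le_total 0 (Real.cos θ) with hcase | hcase
  · -- 1 + cos θ ∈ [1,2]
    have hb : (1 + Real.cos θ) ^ (lam - 1) ≤ K :=
      rpow_le_K (by linarith) (by nlinarith [Real.cos_le_one θ])
    have h1 : Real.sin θ * ((1 - Real.cos θ) ^ (lam - 1) * (1 + Real.cos θ) ^ (lam - 1)) /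
          (D + a * (1 - Real.cos θ)) ^ (lam + 1)
        ≤ K * (Real.sin θ * (1 - Real.cos θ) ^ (lam - 1) /
            (D + a * (1 - Real.cos θ)) ^ (lam + 1)) := by
      rw [← mul_div_assoc]
      apply div_le_div₀ (by positivity) ?_ (Real.rpow_pos_of_pos hP _) le_rfl
      nlinarith [mul_le_mul_of_nonneg_left hb (mul_nonneg hsin.le hs1)]
    have h2 : (0:ℝ) ≤ K / (D + a) ^ (lam + 1) * (Real.sin θ * (1 + Real.cos θ) ^ (lam - 1)) := by
      have : (0:ℝ) < (D + a) ^ (lam + 1) := Real.rpow_pos_of_pos (by linarith) _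
      positivity
    linarith
  · -- 1 - cos θ ∈ [1,2]
    have hb : (1 - Real.cos θ) ^ (lam - 1) ≤ K :=
      rpow_le_K (by linarith) (by nlinarith [Real.neg_one_le_cos θ])
    have hDa : (0:ℝ) < D + a := by linarith
    have hPge : (D + a) ^ (lam + 1) ≤ (D + a * (1 - Real.cos θ)) ^ (lam + 1) := by
      apply Real.rpow_le_rpow hDa.le _ (by linarith)
      nlinarith
    have h1 : Real.sin θ * ((1 - Real.cos θ) ^ (lam - 1) * (1 + Real.cos θ) ^ (lam - 1)) /
          (D + a * (1 - Real.cos θ)) ^ (lam + 1)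
        ≤ K * (Real.sin θ * (1 + Real.cos θ) ^ (lam - 1)) / (D + a) ^ (lam + 1) := by
      apply div_le_div₀ (by positivity) ?_ (Real.rpow_pos_of_pos hDa _) hPge
      nlinarith [mul_le_mul_of_nonneg_left hb (mul_nonneg hsin.le hc1)]
    have h2 : (0:ℝ) ≤ K * (Real.sin θ * (1 - Real.cos θ) ^ (lam - 1) /
        (D + a * (1 - Real.cos θ)) ^ (lam + 1)) := by positivity
    have : K * (Real.sin θ * (1 + Real.cos θ) ^ (lam - 1)) / (D + a) ^ (lam + 1)
        = K / (D + a) ^ (lam + 1) * (Real.sin θ * (1 + Real.cos θ) ^ (lam - 1)) := by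
      ring
    linarith [h1.trans_eq this]

private lemma integral_bound (lam D a : ℝ) (hlam : 0 < lam) (hD : 0 < D) (ha : 0 < a) :
    (∫ θ in (0:ℝ)..π,
        Real.sin θ ^ (2 * lam - 1) / (D + a * (1 - Real.cos θ)) ^ (lam + 1)) ≤
      2 * max 1 ((2:ℝ) ^ (lam - 1)) * 2 ^ lam / (lam * D * a ^ lam) := by
  set K := max 1 ((2:ℝ) ^ (lam - 1)) with hK
  have hKpos : (0:ℝ) < K := lt_of_lt_of_le one_pos (le_max_left _ _)
  have hDa : (0:ℝ) < D + a := by linarith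
  have hDa1 : (0:ℝ) < (D + a) ^ (lam + 1) := Real.rpow_pos_of_pos hDa _
  set g : ℝ → ℝ := fun θ =>
    K * (Real.sin θ * (1 - Real.cos θ) ^ (lam - 1) / (D + a * (1 - Real.cos θ)) ^ (lam + 1)) +
      K / (D + a) ^ (lam + 1) * (Real.sin θ * (1 + Real.cos θ) ^ (lam - 1)) with hg
  set H : ℝ → ℝ := fun θ =>
    K / (lam * D) * ((1 - Real.cos θ) ^ lam / (D + a * (1 - Real.cos θ)) ^ lam) +
      K / ((D + a) ^ (lam + 1) * lam) * (-(1 + Real.cos θ) ^ lam) with hH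
  have hP : ∀ θ : ℝ, 0 < D + a * (1 - Real.cos θ) := by
    intro θ
    have := Real.cos_le_one θ
    nlinarith
  have hderiv : ∀ θ ∈ Ioo (0:ℝ) π, HasDerivAt H (g θ) θ := by
    intro θ hθ
    have h1 := (hasDerivAt_H1 lam D a θ hlam hD ha hθ).const_mul (K / (lam * D))
    have h2 := (hasDerivAt_H2 lam θ hθ).const_mul (K / ((D + a) ^ (lam + 1) * lam))
    have := h1.add h2
    refine this.congr_deriv ?_
    rw [hg]
    have cancel1 : ∀ c q X : ℝ, q ≠ 0 → c / q * (q * X) = c * X := by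
      intros c q X hq; field_simp
    have cancel2 : ∀ c q l Y : ℝ, q ≠ 0 → l ≠ 0 → c / (q * l) * (l * Y) = c / q * Y := by
      intros c q l Y hq hl; field_simp
    rw [cancel1 K (lam * D) _ (by positivity),
      cancel2 K ((D + a) ^ (lam + 1)) lam _ hDa1.ne' hlam.ne']
  have hgpos : ∀ θ ∈ Ioo (0:ℝ) π, 0 ≤ g θ := by
    intro θ hθ
    have hsin : 0 ≤ Real.sin θ := (Real.sin_pos_of_pos_of_lt_pi hθ.1 hθ.2).le
    have h1 : (0:ℝ) ≤ (1 - Real.cos θ) ^ (lam - 1) :=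
      Real.rpow_nonneg (by nlinarith [Real.cos_le_one θ]) _
    have h2 : (0:ℝ) ≤ (1 + Real.cos θ) ^ (lam - 1) :=
      Real.rpow_nonneg (by nlinarith [Real.neg_one_le_cos θ]) _
    have h3 : (0:ℝ) < (D + a * (1 - Real.cos θ)) ^ (lam + 1) :=
      Real.rpow_pos_of_pos (hP θ) _
    rw [hg]
    positivity
  have hHcont : Continuous H := by
    have c1 : Continuous fun θ : ℝ => (1 - Real.cos θ) ^ lam :=
      (continuous_const.sub Real.continuous_cos).rpow_const fun x => Or.inr hlam.le
    have c2 : Continuous fun θ : ℝ => (D + a * (1 - Real.cos θ)) ^ lam :=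
      (continuous_const.add
        (continuous_const.mul (continuous_const.sub Real.continuous_cos))).rpow_const
        fun x => Or.inl (hP x).ne'
    have c3 : Continuous fun θ : ℝ => (1 + Real.cos θ) ^ lam :=
      (continuous_const.add Real.continuous_cos).rpow_const fun x => Or.inr hlam.le
    exact (continuous_const.mul (c1.div c2 fun x => (Real.rpow_pos_of_pos (hP x) lam).ne')).add
      (continuous_const.mul c3.neg)
  have hgint : IntegrableOn g (Ioc 0 π) :=
    intervalIntegral.integrableOn_deriv_of_nonneg hHcont.continuousOn hderiv hgpos
  have hgII : IntervalIntegrable g volume 0 π :=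
    (intervalIntegrable_iff_integrableOn_Ioc_of_le Real.pi_pos.le).2 hgint
  have hval : ∫ θ in (0:ℝ)..π, g θ = H π - H 0 :=
    intervalIntegral.integral_eq_sub_of_hasDeriv_right_of_le Real.pi_pos.le
      hHcont.continuousOn (fun θ hθ => (hderiv θ hθ).hasDerivWithinAt) hgII
  -- compare the integrals
  have hmono : (∫ θ in (0:ℝ)..π,
      Real.sin θ ^ (2 * lam - 1) / (D + a * (1 - Real.cos θ)) ^ (lam + 1)) ≤
      ∫ θ in (0:ℝ)..π, g θ := by
    rw [intervalIntegral.integral_of_le Real.pi_pos.le,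
      intervalIntegral.integral_of_le Real.pi_pos.le,
      MeasureTheory.integral_Ioc_eq_integral_Ioo, MeasureTheory.integral_Ioc_eq_integral_Ioo]
    apply integral_mono_of_nonneg
    · filter_upwards [ae_restrict_mem measurableSet_Ioo] with θ hθ
      have hsin : 0 ≤ Real.sin θ := (Real.sin_pos_of_pos_of_lt_pi hθ.1 hθ.2).le
      exact div_nonneg (Real.rpow_nonneg hsin _) (Real.rpow_nonneg (hP θ).le _)
    · exact hgint.mono_set Ioo_subset_Ioc_self
    · filter_upwards [ae_restrict_mem measurableSet_Ioo] with θ hθ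
      exact pointwise_bound lam D a θ hlam hD ha hθ
  -- compute and bound H π - H 0
  have hHpi : H π = K / (lam * D) * ((2:ℝ) ^ lam / (D + a * 2) ^ lam) := by
    rw [hH]
    simp only [Real.cos_pi]
    norm_num [Real.zero_rpow hlam.ne']
  have hH0 : H 0 = -(K / ((D + a) ^ (lam + 1) * lam) * 2 ^ lam) := by
    rw [hH]
    simp only [Real.cos_zero]
    norm_num [Real.zero_rpow hlam.ne']
  have halam : (0:ℝ) < a ^ lam := Real.rpow_pos_of_pos ha _
  have hb1 : K / (lam * D) * ((2:ℝ) ^ lam / (D + a * 2) ^ lam)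
      ≤ K * 2 ^ lam / (lam * D * a ^ lam) := by
    rw [div_mul_div_comm]
    apply div_le_div₀ (by positivity) le_rfl (by positivity) ?_
    have : a ^ lam ≤ (D + a * 2) ^ lam :=
      Real.rpow_le_rpow ha.le (by linarith) hlam.le
    nlinarith [mul_pos hlam hD]
  have hb2 : K / ((D + a) ^ (lam + 1) * lam) * 2 ^ lam
      ≤ K * 2 ^ lam / (lam * D * a ^ lam) := by
    rw [div_mul_eq_mul_div]
    apply div_le_div₀ (by positivity) le_rfl (by positivity) ?_
    have e : (D + a) ^ (lam + 1) = (D + a) ^ lam * (D + a) :=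
      Real.rpow_add_one hDa.ne' lam
    have h1 : a ^ lam ≤ (D + a) ^ lam := Real.rpow_le_rpow ha.le (by linarith) hlam.le
    have h2 : D * a ^ lam ≤ (D + a) ^ lam * (D + a) := by
      have : (D + a) ^ lam * D ≤ (D + a) ^ lam * (D + a) := by nlinarith [Real.rpow_pos_of_pos hDa lam]
      nlinarith
    rw [e]
    nlinarith
  calc (∫ θ in (0:ℝ)..π,
      Real.sin θ ^ (2 * lam - 1) / (D + a * (1 - Real.cos θ)) ^ (lam + 1))
      ≤ ∫ θ in (0:ℝ)..π, g θ := hmono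
    _ = H π - H 0 := hval
    _ ≤ K * 2 ^ lam / (lam * D * a ^ lam) + K * 2 ^ lam / (lam * D * a ^ lam) := by
        rw [hHpi, hH0]; linarith
    _ = 2 * K * 2 ^ lam / (lam * D * a ^ lam) := by ring

theorem bessel_poisson_kernel_classical_bound (lam : ℝ) (hlam : 0 < lam) :
    ∃ C : ℝ, 0 < C ∧ ∀ x y t : ℝ, 0 < x → 0 < y → 0 < t →
      besselPoissonKernel lam x y t ≤ C * t / ((x - y) ^ 2 + t ^ 2) := by
  set K := max 1 ((2:ℝ) ^ (lam - 1)) with hK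
  have hKpos : (0:ℝ) < K := lt_of_lt_of_le one_pos (le_max_left _ _)
  refine ⟨4 * K / π + 1, by positivity, ?_⟩
  intro x y t hx hy ht
  have hD : (0:ℝ) < (x - y) ^ 2 + t ^ 2 := by positivity
  have ha : (0:ℝ) < 2 * x * y := by positivity
  have hIb := integral_bound lam ((x - y) ^ 2 + t ^ 2) (2 * x * y) hlam hD ha
  have hpre : (0:ℝ) ≤ 2 * lam / π * t * (x * y) ^ lam := by positivity
  have step1 := mul_le_mul_of_nonneg_left hIb hpre
  have h2xy : ((2:ℝ) * x * y) ^ lam = 2 ^ lam * (x * y) ^ lam := by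
    rw [mul_assoc, Real.mul_rpow (by norm_num) (by positivity)]
  have hxyl : (0:ℝ) < (x * y) ^ lam := Real.rpow_pos_of_pos (by positivity) _
  have h2l : (0:ℝ) < (2:ℝ) ^ lam := Real.rpow_pos_of_pos (by norm_num) _
  have heq : 2 * lam / π * t * (x * y) ^ lam *
        (2 * K * 2 ^ lam / (lam * ((x - y) ^ 2 + t ^ 2) * (2 * x * y) ^ lam))
      = 4 * K / π * t / ((x - y) ^ 2 + t ^ 2) := by
    rw [h2xy]
    field_simp
    ring
  have step2 : besselPoissonKernel lam x y t ≤ 4 * K / π * t / ((x - y) ^ 2 + t ^ 2) := by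
    rw [besselPoissonKernel]
    exact step1.trans_eq heq
  refine step2.trans ?_
  apply div_le_div₀ (by positivity) ?_ hD le_rfl
  nlinarith
end

section
/- For every λ > 0 there exists C > 0 such that for all x, y, t ∈ (0,∞), |D_{λ,x} P_t^λ(x,y)| ≤ (C/t) · P_t^λ(x,y), where D_{λ,x} := x^λ ∂_x x^{−λ}. -/
open Real MeasureTheory Set Filter

/-- The denominator of the Poisson kernel integrand. -/
noncomputable def bpkD (y t u θ : ℝ) : ℝ := (u - y) ^ 2 + t ^ 2 + 2 * u * y * (1 - Real.cos θ)

/-- The Poisson kernel integrand, as a function of `u` and `θ`. -/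
noncomputable def bpkF (lam y t u θ : ℝ) : ℝ :=
  (Real.sin θ) ^ (2 * lam - 1) / (bpkD y t u θ) ^ (lam + 1)

/-- The `u`-derivative of `bpkF`. -/
noncomputable def bpkF' (lam y t u θ : ℝ) : ℝ :=
  (0 * (bpkD y t u θ) ^ (lam + 1) -
      (Real.sin θ) ^ (2 * lam - 1) *
        ((2 * (u - y) + 2 * y * (1 - Real.cos θ)) * (lam + 1) * (bpkD y t u θ) ^ (lam + 1 - 1))) /
    ((bpkD y t u θ) ^ (lam + 1)) ^ 2

lemma bpkD_ge (y t u θ : ℝ) (hu : 0 < u) (hy : 0 < y) : t ^ 2 ≤ bpkD y t u θ := by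
  have h := Real.cos_le_one θ
  have := mul_pos hu hy
  unfold bpkD; nlinarith [sq_nonneg (u - y)]

lemma bpkD_pos (y t u θ : ℝ) (hu : 0 < u) (hy : 0 < y) (ht : 0 < t) : 0 < bpkD y t u θ :=
  lt_of_lt_of_le (by positivity) (bpkD_ge y t u θ hu hy)

lemma key_ineq (x y t c : ℝ) (hx : 0 < x) (hy : 0 < y) (ht : 0 < t)
    (h1 : -1 ≤ c) (h2 : c ≤ 1) :
    t * |2*(x-y) + 2*y*(1-c)| ≤ 7 * ((x-y)^2 + t^2 + 2*x*y*(1-c)) := by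
  have habs : |2*(x-y) + 2*y*(1-c)| ≤ 2*|x-y| + 2*y*(1-c) := by
    calc |2*(x-y) + 2*y*(1-c)| ≤ |2*(x-y)| + |2*y*(1-c)| := abs_add_le _ _
    _ = 2*|x-y| + 2*y*(1-c) := by
        rw [abs_mul, abs_mul, abs_of_nonneg (by positivity : (0:ℝ) ≤ 2),
          abs_of_nonneg (by positivity : (0:ℝ) ≤ 2*y), abs_of_nonneg (by linarith : (0:ℝ) ≤ 1 - c)]
  have h3 : t * (2*|x-y| + 2*y*(1-c)) ≤ 7 * ((x-y)^2 + t^2 + 2*x*y*(1-c)) := by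
    have hxy : |x-y| ^ 2 = (x-y)^2 := sq_abs _
    have hxy0 : 0 ≤ |x-y| := abs_nonneg _
    have hyle : y ≤ x + |x-y| := by
      rcases abs_cases (x - y) with ⟨h, _⟩ | ⟨h, _⟩ <;> nlinarith
    have hc : (0:ℝ) ≤ 1 - c := by linarith
    have hprod : 0 ≤ x * y * (1 - c) := by positivity
    rcases le_total x t with hxt | hxt
    · nlinarith [sq_nonneg (|x-y| - t), sq_nonneg (x - t), mul_pos hx hy, hprod,
        mul_nonneg ht.le hc]
    · nlinarith [sq_nonneg (|x-y| - t), hprod,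
        mul_nonneg (mul_nonneg hy.le hc) (by linarith : 0 ≤ x - t)]
  calc t * |2*(x-y) + 2*y*(1-c)| ≤ t * (2*|x-y| + 2*y*(1-c)) :=
        mul_le_mul_of_nonneg_left habs ht.le
  _ ≤ _ := h3

lemma sin_rpow_integrable {p : ℝ} (hp : -1 < p) :
    IntervalIntegrable (fun θ : ℝ => Real.sin θ ^ p) volume 0 π := by
  have hhalf : IntervalIntegrable (fun θ : ℝ => Real.sin θ ^ p) volume 0 (π/2) := by
    have hg : IntervalIntegrable (fun θ : ℝ => (2/π)^p * θ ^ p + 1) volume 0 (π/2) :=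
      ((intervalIntegral.intervalIntegrable_rpow' hp).const_mul _).add intervalIntegrable_const
    refine hg.mono_fun ?_ ?_
    · exact (by fun_prop : Measurable (fun θ : ℝ => Real.sin θ ^ p)).aestronglyMeasurable
    · rw [Filter.EventuallyLE, ae_restrict_iff' measurableSet_uIoc]
      refine ae_of_all _ fun θ hθ => ?_
      rw [uIoc_of_le (by positivity : (0:ℝ) ≤ π/2)] at hθ
      have h0 : 0 < θ := hθ.1
      have h2 : θ ≤ π/2 := hθ.2
      have hs0 : 0 ≤ Real.sin θ := Real.sin_nonneg_of_nonneg_of_le_pi h0.le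
        (h2.trans (by linarith [Real.pi_pos]))
      have hlow : 2/π * θ ≤ Real.sin θ := Real.mul_le_sin h0.le h2
      have hlow0 : 0 < 2/π * θ := by positivity
      rw [Real.norm_eq_abs, Real.norm_eq_abs,
        abs_of_nonneg (by positivity : (0:ℝ) ≤ Real.sin θ ^ p)]
      have hb : Real.sin θ ^ p ≤ (2/π)^p * θ ^ p + 1 := by
        rcases le_or_gt 0 p with hp0 | hp0
        · have h1 : Real.sin θ ^ p ≤ 1 := Real.rpow_le_one hs0 (Real.sin_le_one θ) hp0
          have h2'' : (0:ℝ) ≤ (2/π)^p * θ^p := by positivity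
          linarith
        · have h1 : Real.sin θ ^ p ≤ (2/π * θ) ^ p :=
            Real.rpow_le_rpow_of_nonpos hlow0 hlow hp0.le
          have h2' : (2/π * θ) ^ p = (2/π)^p * θ^p :=
            Real.mul_rpow (by positivity) h0.le
          linarith [h1, h2'.le]
      exact hb.trans (le_abs_self _)
  have hhalf2 : IntervalIntegrable (fun θ : ℝ => Real.sin θ ^ p) volume (π/2) π := by
    have h := (hhalf.comp_sub_left π).symm
    have heq : (fun θ : ℝ => Real.sin (π - θ) ^ p) = fun θ => Real.sin θ ^ p := by
      funext θ; rw [Real.sin_pi_sub]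
    rw [heq] at h
    simpa [sub_half] using h
  exact hhalf.trans hhalf2

lemma bpkF_hasDeriv (lam y t u θ : ℝ) (hu : 0 < u) (hy : 0 < y) (ht : 0 < t) :
    HasDerivAt (fun v : ℝ => bpkF lam y t v θ) (bpkF' lam y t u θ) u := by
  have hD : HasDerivAt (fun v : ℝ => bpkD y t v θ)
      (2 * (u - y) + 2 * y * (1 - Real.cos θ)) u := by
    have h1 : HasDerivAt (fun v : ℝ => (v - y) ^ 2) (2 * (u - y)) u := by
      simpa using ((hasDerivAt_id u).sub_const y).fun_pow 2
    have h2 : HasDerivAt (fun v : ℝ => (2 * y * (1 - Real.cos θ)) * v)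
        (2 * y * (1 - Real.cos θ)) u := by
      simpa using (hasDerivAt_id u).const_mul (2 * y * (1 - Real.cos θ))
    have hfun : (fun v : ℝ => bpkD y t v θ)
        = fun v => ((v - y) ^ 2 + t ^ 2) + (2 * y * (1 - Real.cos θ)) * v := by
      funext v; unfold bpkD; ring
    rw [hfun]
    exact (h1.add_const (t ^ 2)).add h2
  have hDpos : 0 < bpkD y t u θ := bpkD_pos y t u θ hu hy ht
  have hpow : HasDerivAt (fun v : ℝ => (bpkD y t v θ) ^ (lam + 1))
      ((2 * (u - y) + 2 * y * (1 - Real.cos θ)) * (lam + 1) * (bpkD y t u θ) ^ (lam + 1 - 1)) u :=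
    hD.rpow_const (Or.inl hDpos.ne')
  have hne : (bpkD y t u θ) ^ (lam + 1) ≠ 0 := (Real.rpow_pos_of_pos hDpos _).ne'
  exact (hasDerivAt_const u ((Real.sin θ) ^ (2 * lam - 1))).div hpow hne

lemma bpkF'_bound (lam y t u θ : ℝ) (hlam : 0 < lam) (hu : 0 < u) (hy : 0 < y) (ht : 0 < t)
    (hs : 0 ≤ Real.sin θ) :
    |bpkF' lam y t u θ| ≤ (7 * (lam + 1) / t) * bpkF lam y t u θ := by
  set A := bpkD y t u θ with hA
  have hApos : 0 < A := bpkD_pos y t u θ hu hy ht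
  set S := (Real.sin θ) ^ (2 * lam - 1) with hS
  have hSpos : 0 ≤ S := Real.rpow_nonneg hs _
  set dd := 2 * (u - y) + 2 * y * (1 - Real.cos θ) with hdd
  have hkey : t * |dd| ≤ 7 * A := by
    have := key_ineq u y t (Real.cos θ) hu hy ht (Real.neg_one_le_cos θ) (Real.cos_le_one θ)
    simpa [hA, bpkD, hdd] using this
  have he : lam + 1 - 1 = lam := by ring
  have hB : (0:ℝ) < A ^ (lam + 1) := Real.rpow_pos_of_pos hApos _
  have hG : (0:ℝ) < A ^ lam := Real.rpow_pos_of_pos hApos _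
  have habs : |bpkF' lam y t u θ| = S * ((lam + 1) * (A ^ lam) * |dd|) / (A ^ (lam + 1)) ^ 2 := by
    rw [bpkF', ← hA, ← hS, ← hdd, he, zero_mul, zero_sub, abs_div, abs_neg,
      abs_of_pos (pow_pos hB 2), abs_mul, abs_of_nonneg hSpos, abs_mul, abs_mul,
      abs_of_nonneg hG.le, abs_of_nonneg (by linarith : (0:ℝ) ≤ lam + 1)]
    ring
  rw [habs]
  have hddle : |dd| ≤ 7 * A / t := by
    rw [le_div_iff₀ ht]; linarith [hkey]
  have hB2 : (A ^ (lam + 1)) ^ 2 = A ^ (lam + 1) * (A ^ lam * A) := by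
    rw [sq]; congr 1
    exact Real.rpow_add_one hApos.ne' lam
  calc S * ((lam + 1) * (A ^ lam) * |dd|) / (A ^ (lam + 1)) ^ 2
      ≤ S * ((lam + 1) * (A ^ lam) * (7 * A / t)) / (A ^ (lam + 1)) ^ 2 := by
        gcongr
  _ = (7 * (lam + 1) / t) * (S / A ^ (lam + 1)) := by
        rw [hB2]; field_simp
  _ = (7 * (lam + 1) / t) * bpkF lam y t u θ := by rw [bpkF, ← hA, ← hS]

lemma bpkF_nonneg (lam y t u θ : ℝ) (hu : 0 < u) (hy : 0 < y) (ht : 0 < t)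
    (hs : 0 ≤ Real.sin θ) : 0 ≤ bpkF lam y t u θ := by
  unfold bpkF
  exact div_nonneg (Real.rpow_nonneg hs _)
    (Real.rpow_nonneg (bpkD_pos y t u θ hu hy ht).le _)

lemma bpkF_le (lam y t u θ : ℝ) (hu : 0 < u) (hy : 0 < y) (ht : 0 < t)
    (hlam : 0 < lam) (hs : 0 ≤ Real.sin θ) :
    bpkF lam y t u θ ≤ (Real.sin θ) ^ (2 * lam - 1) * ((t ^ 2) ^ (lam + 1))⁻¹ := by
  rw [bpkF, div_eq_mul_inv]
  have h1 : 0 ≤ (Real.sin θ) ^ (2 * lam - 1) := Real.rpow_nonneg hs _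
  refine mul_le_mul_of_nonneg_left ?_ h1
  exact inv_anti₀ (Real.rpow_pos_of_pos (by positivity) _)
    (Real.rpow_le_rpow (by positivity) (bpkD_ge y t u θ hu hy) (by linarith))

lemma bpkF_meas (lam y t u : ℝ) : Measurable (fun θ => bpkF lam y t u θ) := by
  unfold bpkF bpkD; fun_prop

lemma bpkF'_meas (lam y t u : ℝ) : Measurable (fun θ => bpkF' lam y t u θ) := by
  unfold bpkF' bpkD; fun_prop

theorem bessel_poisson_kernel_Dlam_bound (lam : ℝ) (hlam : 0 < lam) :
    ∃ C : ℝ, 0 < C ∧ ∀ x y t : ℝ, 0 < x → 0 < y → 0 < t →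
      |x ^ lam * deriv (fun u : ℝ => u ^ (-lam) * besselPoissonKernel lam u y t) x| ≤
        (C / t) * besselPoissonKernel lam x y t := by
  refine ⟨7 * (lam + 1), by positivity, fun x y t hx hy ht => ?_⟩
  have hπ := Real.pi_pos
  have hp1 : (-1:ℝ) < 2 * lam - 1 := by linarith
  have hker : ∀ u : ℝ, besselPoissonKernel lam u y t
      = (2 * lam / π) * t * (u * y) ^ lam * ∫ θ in (0:ℝ)..π, bpkF lam y t u θ := fun u => rfl
  -- membership facts for the ball
  have hball : ∀ u ∈ Metric.ball x (x / 2), 0 < u := by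
    intro u hu
    rw [Metric.mem_ball, Real.dist_eq, abs_sub_lt_iff] at hu
    linarith [hu.2]
  have hsin : ∀ θ ∈ Set.uIoc (0:ℝ) π, 0 ≤ Real.sin θ := by
    intro θ hθ
    rw [uIoc_of_le hπ.le] at hθ
    exact Real.sin_nonneg_of_nonneg_of_le_pi hθ.1.le hθ.2
  -- integrability of F x
  have hFint : IntervalIntegrable (fun θ => bpkF lam y t x θ) volume 0 π := by
    refine (((sin_rpow_integrable hp1).mul_const (((t ^ 2) ^ (lam + 1))⁻¹))).mono_fun
      (bpkF_meas lam y t x).aestronglyMeasurable ?_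
    rw [Filter.EventuallyLE, ae_restrict_iff' measurableSet_uIoc]
    refine ae_of_all _ fun θ hθ => ?_
    have hs := hsin θ hθ
    rw [Real.norm_eq_abs, Real.norm_eq_abs, abs_of_nonneg (bpkF_nonneg lam y t x θ hx hy ht hs)]
    exact (bpkF_le lam y t x θ hx hy ht hlam hs).trans (le_abs_self _)
  -- the dominated-derivative theorem
  obtain ⟨hF'int, hJ⟩ := intervalIntegral.hasDerivAt_integral_of_dominated_loc_of_deriv_le
    (F := fun u θ => bpkF lam y t u θ) (F' := fun u θ => bpkF' lam y t u θ)
    (bound := fun θ => (7 * (lam + 1) / t) * ((Real.sin θ) ^ (2 * lam - 1) * ((t ^ 2) ^ (lam + 1))⁻¹))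
    (Metric.ball_mem_nhds x (half_pos hx))
    (Filter.Eventually.of_forall fun u => (bpkF_meas lam y t u).aestronglyMeasurable)
    hFint
    (bpkF'_meas lam y t x).aestronglyMeasurable
    (ae_of_all _ fun θ hθ u hu => by
      have hu0 := hball u hu
      have hs := hsin θ hθ
      rw [Real.norm_eq_abs]
      refine (bpkF'_bound lam y t u θ hlam hu0 hy ht hs).trans ?_
      exact mul_le_mul_of_nonneg_left (bpkF_le lam y t u θ hu0 hy ht hlam hs) (by positivity))
    (((sin_rpow_integrable hp1).mul_const _).const_mul _)
    (ae_of_all _ fun θ hθ u hu => bpkF_hasDeriv lam y t u θ (hball u hu) hy ht)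
  -- identify the derivative
  have heq : (fun u : ℝ => u ^ (-lam) * besselPoissonKernel lam u y t)
      =ᶠ[nhds x] fun u => (2 * lam / π * t * y ^ lam) * ∫ θ in (0:ℝ)..π, bpkF lam y t u θ := by
    filter_upwards [Ioi_mem_nhds hx] with u hu
    have hu0 : (0:ℝ) < u := hu
    rw [hker u, Real.mul_rpow hu0.le hy.le, Real.rpow_neg hu0.le]
    have hne : u ^ lam ≠ 0 := (Real.rpow_pos_of_pos hu0 lam).ne'
    field_simp
  have hderiv : deriv (fun u : ℝ => u ^ (-lam) * besselPoissonKernel lam u y t) x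
      = (2 * lam / π * t * y ^ lam) * ∫ θ in (0:ℝ)..π, bpkF' lam y t x θ := by
    rw [heq.deriv_eq]
    exact (hJ.const_mul (2 * lam / π * t * y ^ lam)).deriv
  -- estimate the integral
  have hIb : |∫ θ in (0:ℝ)..π, bpkF' lam y t x θ|
      ≤ (7 * (lam + 1) / t) * ∫ θ in (0:ℝ)..π, bpkF lam y t x θ := by
    have h1 : |∫ θ in (0:ℝ)..π, bpkF' lam y t x θ|
        ≤ ∫ θ in (0:ℝ)..π, |bpkF' lam y t x θ| :=
      intervalIntegral.abs_integral_le_integral_abs hπ.le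
    have h2 : (∫ θ in (0:ℝ)..π, |bpkF' lam y t x θ|)
        ≤ ∫ θ in (0:ℝ)..π, (7 * (lam + 1) / t) * bpkF lam y t x θ := by
      refine intervalIntegral.integral_mono_on hπ.le hF'int.abs (hFint.const_mul _)
        (fun θ hθ => ?_)
      have hs : 0 ≤ Real.sin θ := Real.sin_nonneg_of_nonneg_of_le_pi hθ.1 hθ.2
      exact bpkF'_bound lam y t x θ hlam hx hy ht hs
    rw [intervalIntegral.integral_const_mul] at h2
    linarith
  -- conclude
  have hc0 : (0:ℝ) < 2 * lam / π * t * y ^ lam := by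
    have := Real.rpow_pos_of_pos hy lam
    positivity
  have hxlam : (0:ℝ) < x ^ lam := Real.rpow_pos_of_pos hx lam
  rw [hderiv, abs_mul, abs_mul, abs_of_pos hxlam, abs_of_pos hc0]
  calc x ^ lam * ((2 * lam / π * t * y ^ lam) * |∫ θ in (0:ℝ)..π, bpkF' lam y t x θ|)
      ≤ x ^ lam * ((2 * lam / π * t * y ^ lam)
        * ((7 * (lam + 1) / t) * ∫ θ in (0:ℝ)..π, bpkF lam y t x θ)) := by
        gcongr
  _ = (7 * (lam + 1) / t) * besselPoissonKernel lam x y t := by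
        rw [hker x, Real.mul_rpow hx.le hy.le]
        ring
end

section
/- For all x, y, t ∈ (0,∞) and θ ∈ [0,π], (|x−y| + min{x,y}(1−cos θ)) / ((x−y)² + t² + 2xy(1−cos θ)) ≤ (C/t)(1 + min{x,y}/√(xy)) ≤ 2C/t, where C is an absolute constant. -/
open Real

theorem elementary_kernel_quotient_bound :
    ∃ C : ℝ, 0 < C ∧ ∀ x y t θ : ℝ, 0 < x → 0 < y → 0 < t →
      θ ∈ Set.Icc 0 π →
      (|x - y| + min x y * (1 - Real.cos θ)) /
          ((x - y) ^ 2 + t ^ 2 + 2 * x * y * (1 - Real.cos θ)) ≤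
        (C / t) * (1 + min x y / Real.sqrt (x * y)) ∧
      (C / t) * (1 + min x y / Real.sqrt (x * y)) ≤ 2 * C / t := by
  refine ⟨1/2, by norm_num, fun x y t θ hx hy ht _ => ?_⟩
  set m := min x y with hm
  set u := 1 - Real.cos θ with hudef
  set s := Real.sqrt (x * y) with hs
  have hxy : 0 < x * y := mul_pos hx hy
  have hspos : 0 < s := Real.sqrt_pos.mpr hxy
  have hm0 : 0 < m := lt_min hx hy
  have hu0 : 0 ≤ u := by
    have := Real.cos_le_one θ; simp [hudef]; linarith
  have hu2 : u ≤ 2 := by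
    have := Real.neg_one_le_cos θ; simp [hudef]; linarith
  have hs2 : s ^ 2 = x * y := Real.sq_sqrt hxy.le
  have hms : m ≤ s := by
    have h1 : m ^ 2 ≤ x * y := by
      rcases min_le_iff.mpr (Or.inl (le_refl x)) with h
      have h2 : m ≤ x := min_le_left x y
      have h3 : m ≤ y := min_le_right x y
      nlinarith
    nlinarith [hs2, hspos]
  have hD : 0 < (x - y) ^ 2 + t ^ 2 + 2 * x * y * u := by
    have : 0 ≤ 2 * x * y * u := by positivity
    nlinarith [sq_nonneg (x - y)]
  -- first piece: |x-y|/D ≤ 1/(2t)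
  have h1 : |x - y| / ((x - y) ^ 2 + t ^ 2 + 2 * x * y * u) ≤ 1 / (2 * t) := by
    rw [div_le_div_iff₀ hD (by positivity)]
    have habs : |x - y| ^ 2 = (x - y) ^ 2 := sq_abs _
    nlinarith [sq_nonneg (|x - y| - t), abs_nonneg (x - y), mul_nonneg (mul_nonneg hxy.le hu0) (le_of_lt ht)]
  -- second piece: m*u/D ≤ m/(2 t s)
  have h2 : m * u / ((x - y) ^ 2 + t ^ 2 + 2 * x * y * u) ≤ m / (2 * t * s) := by
    rw [div_le_div_iff₀ hD (by positivity)]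
    -- suffices: 2*t*s*u ≤ t^2 + 2*x*y*u ≤ D
    have key : 2 * t * s * u ≤ t ^ 2 + 2 * x * y * u := by
      set w := Real.sqrt (2 * u) with hw
      have hw0 : 0 ≤ w := Real.sqrt_nonneg _
      have hw2 : w ^ 2 = 2 * u := Real.sq_sqrt (by linarith)
      have huw : u ≤ w := by nlinarith
      have := sq_nonneg (t - s * w)
      nlinarith [mul_nonneg (mul_nonneg (mul_pos ht hspos).le hw0) hu0,
        mul_pos ht hspos]
    nlinarith [sq_nonneg (x - y), mul_nonneg (mul_nonneg (sq_nonneg (x - y)) hm0.le) hu0, hm0.le, hu0]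
  have hsum : (|x - y| + m * u) / ((x - y) ^ 2 + t ^ 2 + 2 * x * y * u)
      ≤ 1 / (2 * t) + m / (2 * t * s) := by
    rw [add_div]; exact add_le_add h1 h2
  constructor
  · have heq : (1/2 / t) * (1 + m / s) = 1 / (2 * t) + m / (2 * t * s) := by
      field_simp
    rw [heq]; exact hsum
  · have : m / s ≤ 1 := (div_le_one hspos).mpr hms
    have hCt : 0 ≤ (1:ℝ)/2 / t := by positivity
    have := mul_le_mul_of_nonneg_left (by linarith : 1 + m / s ≤ 2) hCt
    calc (1/2 / t) * (1 + m / s) ≤ (1/2 / t) * 2 := this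
      _ = 2 * (1/2) / t := by ring
end
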